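/- arXiv:2103.03112 — 5 statements merged into one kernel-verified Lean document; each statement's English description precedes it below -/
import Mathlib

section
/- Let 1 < p < ∞ and let v be a weight on a σ-finite filtered measure space such that v and v^{1-p'} are integrable over every set of finite measure in every F_i. Suppose there is a constant C > 0 such that ||Mf||_{L^p(v)} ≤ C ||f||_{L^p(v)} for every function f in the class L. Then v is an A_p weight, and moreover for every i ∈ ℤ the inequality E_i(v)·E_i(v^{1-p'})^{p-1} ≤ C^p holds μ-almost everywhere; in particular [v]_{A_p} ≤ C^p. -/
open MeasureTheory

private lemma aux_main {Ω : Type*} {m m0 : MeasurableSpace Ω} (hm : m ≤ m0)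
    (μ : Measure Ω) [SigmaFinite μ] [SigmaFinite (μ.trim hm)]
    {p p' : ℝ} (hp : 1 < p) (hp' : p' = p / (p - 1))
    {v : Ω → ℝ} (hv0 : 0 ≤ v) (hvint : Integrable v μ)
    (hσint : Integrable (fun ω => v ω ^ (1 - p')) μ)
    {C : ℝ} (hC : 0 < C)
    (key : ∀ S : Set Ω, MeasurableSet[m] S → μ S < ⊤ →
      (∫⁻ ω, (ENNReal.ofReal |(μ[S.indicator (fun ω => v ω ^ (1 - p'))|m]) ω|) ^ p
          * ENNReal.ofReal (v ω) ∂μ) ^ (1 / p)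
        ≤ ENNReal.ofReal C *
          (∫⁻ ω, ENNReal.ofReal (|S.indicator (fun ω => v ω ^ (1 - p')) ω| ^ p)
            * ENNReal.ofReal (v ω) ∂μ) ^ (1 / p)) :
    ∀ᵐ ω ∂μ, (μ[v|m]) ω * ((μ[fun ω => v ω ^ (1 - p')|m]) ω) ^ (p - 1) ≤ C ^ p := by
  have hp0 : (0:ℝ) < p := by linarith
  have hpne : p ≠ 0 := ne_of_gt hp0
  have hp1 : p - 1 ≠ 0 := by intro h; nlinarith [sub_eq_zero.mp h]
  have hp'1 : 1 < p' := by
    rw [hp', one_lt_div (by linarith)]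
    linarith
  have hq : 1 - p' ≠ 0 := by linarith
  set σ : Ω → ℝ := fun ω => v ω ^ (1 - p') with hσdef
  have hσ0 : ∀ ω, 0 ≤ σ ω := fun ω => Real.rpow_nonneg (hv0 ω) _
  -- key pointwise identity : |σ|^p * v = σ
  have hptwise : ∀ ω, |σ ω| ^ p * v ω = σ ω := by
    intro ω
    rw [abs_of_nonneg (hσ0 ω)]
    have hvω : (0:ℝ) ≤ v ω := hv0 ω
    rcases hvω.eq_or_lt with h | h
    · simp only [hσdef, ← h, Real.zero_rpow hq, Real.zero_rpow hpne, zero_mul, mul_zero]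
    · have hexp : (1 - p') * p + 1 = 1 - p' := by
        rw [hp']; field_simp; ring
      simp only [hσdef]
      calc (v ω ^ (1 - p')) ^ p * v ω = v ω ^ ((1 - p') * p) * v ω ^ (1:ℝ) := by
            rw [← Real.rpow_mul (hv0 ω), Real.rpow_one]
        _ = v ω ^ ((1 - p') * p + 1) := (Real.rpow_add h _ _).symm
        _ = v ω ^ (1 - p') := by rw [hexp]
  set Eσ : Ω → ℝ := μ[σ|m] with hEσdef
  set Ev : Ω → ℝ := μ[v|m] with hEvdef
  have hEσ0 : 0 ≤ᵐ[μ] Eσ := condExp_nonneg (ae_of_all _ hσ0)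
  have hEv0 : 0 ≤ᵐ[μ] Ev := condExp_nonneg (ae_of_all _ hv0)
  -- measurability of the truncated power of Eσ
  have hmax : Measurable[m] fun ω => max (Eσ ω) 0 :=
    (stronglyMeasurable_condExp.measurable).max measurable_const
  have hrpm : Measurable[m] fun ω => max (Eσ ω) 0 ^ p :=
    ((Real.continuous_rpow_const hp0.le).measurable).comp hmax
  set W : Ω → ℝ := fun ω => max (Eσ ω) 0 ^ p * Ev ω with hWdef
  have hWm : StronglyMeasurable[m] W :=
    (hrpm.stronglyMeasurable).mul stronglyMeasurable_condExp
  -- per-set inequality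
  have main : ∀ S : Set Ω, MeasurableSet[m] S → μ S < ⊤ →
      Integrable W (μ.restrict S) ∧ ∫ ω in S, W ω ∂μ ≤ C ^ p * ∫ ω in S, Eσ ω ∂μ := by
    intro S hS hμS
    set f : Ω → ℝ := S.indicator σ with hfdef
    have hfint : Integrable f μ := hσint.indicator (hm S hS)
    have hf0 : ∀ ω, 0 ≤ f ω := fun ω => Set.indicator_nonneg (fun ω _ => hσ0 ω) ω
    set I : ℝ := ∫ ω, f ω ∂μ with hIdef
    have hI0 : 0 ≤ I := integral_nonneg hf0
    -- rewrite RHS lintegral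
    have hY : (∫⁻ ω, ENNReal.ofReal (|f ω| ^ p) * ENNReal.ofReal (v ω) ∂μ)
        = ENNReal.ofReal I := by
      rw [hIdef, ofReal_integral_eq_lintegral_ofReal hfint (ae_of_all _ hf0)]
      refine lintegral_congr fun ω => ?_
      rw [← ENNReal.ofReal_mul (by positivity)]
      congr 1
      by_cases hω : ω ∈ S
      · simp only [hfdef, Set.indicator_of_mem hω]; exact hptwise ω
      · simp [hfdef, Set.indicator_of_notMem hω, Real.zero_rpow hpne]
    -- rewrite LHS lintegral
    set G : Ω → ℝ := S.indicator (fun ω => max (Eσ ω) 0 ^ p) with hGdef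
    have hG0 : ∀ ω, 0 ≤ G ω :=
      fun ω => Set.indicator_nonneg (fun ω _ => Real.rpow_nonneg (le_max_right _ _) _) ω
    have hcond : μ[f|m] =ᵐ[μ] S.indicator Eσ := condExp_indicator hσint hS
    have hX : (∫⁻ ω, (ENNReal.ofReal |(μ[f|m]) ω|) ^ p * ENNReal.ofReal (v ω) ∂μ)
        = ∫⁻ ω, ENNReal.ofReal (G ω * v ω) ∂μ := by
      refine lintegral_congr_ae ?_
      filter_upwards [hcond, hEσ0] with ω h1 h2
      have h2' : (0:ℝ) ≤ Eσ ω := h2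
      rw [h1]
      by_cases hω : ω ∈ S
      · simp only [Set.indicator_of_mem hω, hGdef]
        rw [abs_of_nonneg h2', max_eq_left h2', ENNReal.ofReal_rpow_of_nonneg h2' hp0.le,
          ← ENNReal.ofReal_mul (Real.rpow_nonneg h2' _)]
      · simp [hGdef, Set.indicator_of_notMem hω, ENNReal.zero_rpow_of_pos hp0]
    -- use the key hypothesis
    have h1 : (∫⁻ ω, ENNReal.ofReal (G ω * v ω) ∂μ) ≤ ENNReal.ofReal (C ^ p * I) := by
      have h := ENNReal.rpow_le_rpow (key S hS hμS) hp0.le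
      rw [← ENNReal.rpow_mul, one_div_mul_cancel hpne, ENNReal.rpow_one] at h
      rw [ENNReal.mul_rpow_of_nonneg _ _ hp0.le, ← ENNReal.rpow_mul,
        one_div_mul_cancel hpne, ENNReal.rpow_one] at h
      rw [hX, hY] at h
      rwa [ENNReal.ofReal_mul (Real.rpow_nonneg hC.le _),
        ← ENNReal.ofReal_rpow_of_nonneg hC.le hp0.le]
    -- integrability of G * v
    have hGm : StronglyMeasurable[m] G := (hrpm.stronglyMeasurable).indicator hS
    have hGv0 : ∀ ω, 0 ≤ G ω * v ω := fun ω => mul_nonneg (hG0 ω) (hv0 ω)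
    have hGvmeas : AEStronglyMeasurable (fun ω => G ω * v ω) μ :=
      ((hGm.mono hm).aestronglyMeasurable).mul hvint.1
    have hGvint : Integrable (fun ω => G ω * v ω) μ :=
      ⟨hGvmeas, (hasFiniteIntegral_iff_ofReal (ae_of_all _ hGv0)).mpr
        (lt_of_le_of_lt h1 ENNReal.ofReal_lt_top)⟩
    have hGvle : ∫ ω, G ω * v ω ∂μ ≤ C ^ p * I := by
      rw [integral_eq_lintegral_of_nonneg_ae (ae_of_all _ hGv0) hGvmeas]
      have := ENNReal.toReal_mono ENNReal.ofReal_ne_top h1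
      rwa [ENNReal.toReal_ofReal (mul_nonneg (Real.rpow_nonneg hC.le _) hI0)] at this
    -- pull-out property
    have hpull : μ[G * v|m] =ᵐ[μ] G * Ev :=
      condExp_mul_of_stronglyMeasurable_left hGm hGvint hvint
    have hGEv : ∫ ω, G ω * Ev ω ∂μ = ∫ ω, G ω * v ω ∂μ := by
      have h5 : ∫ ω, (G * v) ω ∂μ = ∫ ω, G ω * v ω ∂μ := rfl
      rw [← h5, ← integral_condExp hm (f := G * v)]
      exact integral_congr_ae hpull.symm
    -- identify with indicators
    have hGW : ∀ ω, G ω * Ev ω = S.indicator W ω := by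
      intro ω
      by_cases hω : ω ∈ S
      · simp [hGdef, hWdef, Set.indicator_of_mem hω]
      · simp [hGdef, Set.indicator_of_notMem hω]
    have hWint : Integrable W (μ.restrict S) := by
      have : Integrable (S.indicator W) μ := by
        refine (integrable_condExp (m := m) (f := G * v)).congr ?_
        refine hpull.mono fun ω hω => ?_
        rw [← hGW ω]; exact hω
      exact (integrable_indicator_iff (hm S hS)).mp this
    have hWle : ∫ ω in S, W ω ∂μ ≤ C ^ p * ∫ ω in S, Eσ ω ∂μ := by
      have hIS : I = ∫ ω in S, Eσ ω ∂μ := by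
        rw [hIdef, hfdef, integral_indicator (hm S hS), setIntegral_condExp hm hσint hS]
      rw [← integral_indicator (hm S hS)]
      calc ∫ ω, S.indicator W ω ∂μ = ∫ ω, G ω * Ev ω ∂μ :=
            integral_congr_ae (ae_of_all _ fun ω => (hGW ω).symm)
        _ = ∫ ω, G ω * v ω ∂μ := hGEv
        _ ≤ C ^ p * I := hGvle
        _ = C ^ p * ∫ ω in S, Eσ ω ∂μ := by rw [hIS]
    exact ⟨hWint, hWle⟩
  -- pass to a.e. inequality via trimmed measure
  set D : Ω → ℝ := fun ω => C ^ p * Eσ ω - W ω with hDdef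
  have hDm : StronglyMeasurable[m] D :=
    (stronglyMeasurable_const.mul stronglyMeasurable_condExp).sub hWm
  have hDint : ∀ S : Set Ω, MeasurableSet[m] S → μ S < ⊤ → Integrable D (μ.restrict S) := by
    intro S hS hμS
    exact ((integrable_condExp.const_mul (C ^ p)).restrict).sub (main S hS hμS).1
  have hD0 : ∀ S : Set Ω, MeasurableSet[m] S → μ S < ⊤ → 0 ≤ ∫ ω in S, D ω ∂μ := by
    intro S hS hμS
    rw [hDdef]
    rw [integral_sub ((integrable_condExp.const_mul (C ^ p)).restrict) (main S hS hμS).1]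
    rw [integral_const_mul]
    linarith [(main S hS hμS).2]
  have hDae : 0 ≤ᵐ[μ.trim hm] D := by
    refine ae_nonneg_of_forall_setIntegral_nonneg_of_sigmaFinite ?_ ?_
    · intro s hs hμs
      have hμs' : μ s < ⊤ := by rwa [trim_measurableSet_eq hm hs] at hμs
      have := Integrable.trim hm (hDint s hs hμs') hDm
      rwa [← restrict_trim hm μ hs] at this
    · intro s hs hμs
      have hμs' : μ s < ⊤ := by rwa [trim_measurableSet_eq hm hs] at hμs
      rw [← setIntegral_trim hm hDm hs]
      exact hD0 s hs hμs'
  have hD : 0 ≤ᵐ[μ] D := ae_le_of_ae_le_trim hDae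
  filter_upwards [hD, hEσ0, hEv0] with ω h1 h2 h3
  have h2' : (0:ℝ) ≤ Eσ ω := h2
  have h1'' : (0:ℝ) ≤ D ω := h1
  have h1' : Eσ ω ^ p * Ev ω ≤ C ^ p * Eσ ω := by
    have hsub : (0:ℝ) ≤ C ^ p * Eσ ω - W ω := h1''
    have hW : W ω = Eσ ω ^ p * Ev ω := by rw [hWdef]; simp [max_eq_left h2']
    rw [hW] at hsub
    linarith
  rcases h2'.eq_or_lt with h | h
  · rw [← h, Real.zero_rpow hp1, mul_zero]
    exact Real.rpow_nonneg hC.le p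
  · refine le_of_mul_le_mul_right ?_ h
    calc Ev ω * Eσ ω ^ (p - 1) * Eσ ω = Eσ ω ^ p * Ev ω := by
          rw [mul_assoc, ← Real.rpow_add_one (ne_of_gt h) (p - 1), sub_add_cancel, mul_comm]
      _ ≤ C ^ p * Eσ ω := h1'

/-- If the Doob maximal operator `M f = sup_i |E_i f|` satisfies
`‖Mf‖_{L^p(v)} ≤ C ‖f‖_{L^p(v)}` for all `f` in the class `L`, then `v` is an `A_p`
weight; more precisely `E_i(v) · E_i(v^{1-p'})^{p-1} ≤ C^p` a.e. for every `i`, and in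
particular the smallest `A_p` constant of `v` is at most `C^p`. -/
theorem stmt_0 {Ω : Type*} {m0 : MeasurableSpace Ω} (μ : Measure Ω) [SigmaFinite μ]
    (ℱ : Filtration ℤ m0) [∀ i : ℤ, SigmaFinite (μ.trim (ℱ.le i))]
    (p p' : ℝ) (hp : 1 < p) (hp' : p' = p / (p - 1))
    (v : Ω → ℝ) (hv0 : 0 ≤ v)
    (hvL : ∀ i : ℤ, ∀ s : Set Ω, MeasurableSet[ℱ i] s → μ s < ⊤ → IntegrableOn v s μ)
    (hσL : ∀ i : ℤ, ∀ s : Set Ω, MeasurableSet[ℱ i] s → μ s < ⊤ →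
      IntegrableOn (fun ω => v ω ^ (1 - p')) s μ)
    (C : ℝ) (hC : 0 < C)
    (hbound : ∀ f : Ω → ℝ,
      (∀ i : ℤ, ∀ s : Set Ω, MeasurableSet[ℱ i] s → μ s < ⊤ → IntegrableOn f s μ) →
      (∫⁻ ω, (⨆ i : ℤ, ENNReal.ofReal |(μ[f|ℱ i]) ω|) ^ p * ENNReal.ofReal (v ω) ∂μ) ^ (1 / p)
        ≤ ENNReal.ofReal C *
          (∫⁻ ω, ENNReal.ofReal (|f ω| ^ p) * ENNReal.ofReal (v ω) ∂μ) ^ (1 / p)) :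
    (∀ i : ℤ, ∀ᵐ ω ∂μ,
      (μ[v|ℱ i]) ω * ((μ[fun ω => v ω ^ (1 - p')|ℱ i]) ω) ^ (p - 1) ≤ C ^ p) ∧
    ∀ Cv : ℝ,
      ((∀ i : ℤ, ∀ᵐ ω ∂μ,
          (μ[v|ℱ i]) ω * ((μ[fun ω => v ω ^ (1 - p')|ℱ i]) ω) ^ (p - 1) ≤ Cv) ∧
        ∀ C' : ℝ,
          (∀ i : ℤ, ∀ᵐ ω ∂μ,
            (μ[v|ℱ i]) ω * ((μ[fun ω => v ω ^ (1 - p')|ℱ i]) ω) ^ (p - 1) ≤ C') →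
          Cv ≤ C') →
      Cv ≤ C ^ p := by
  have hp0 : (0:ℝ) < p := by linarith
  have hp1 : p - 1 ≠ 0 := by
    intro h; nlinarith [sub_eq_zero.mp h]
  have hCp0 : 0 ≤ C ^ p := Real.rpow_nonneg hC.le p
  have part1 : ∀ i : ℤ, ∀ᵐ ω ∂μ,
      (μ[v|ℱ i]) ω * ((μ[fun ω => v ω ^ (1 - p')|ℱ i]) ω) ^ (p - 1) ≤ C ^ p := by
    intro i
    by_cases hvint : Integrable v μ
    · by_cases hσint : Integrable (fun ω => v ω ^ (1 - p')) μ
      · refine aux_main (ℱ.le i) μ hp hp' hv0 hvint hσint hC ?_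
        intro S hS hμS
        refine le_trans ?_ (hbound (S.indicator (fun ω => v ω ^ (1 - p')))
          (fun j s hs hμs => (hσint.indicator ((ℱ.le i) S hS)).integrableOn))
        refine ENNReal.rpow_le_rpow ?_ (by positivity)
        refine lintegral_mono fun ω => ?_
        gcongr
        exact le_iSup (fun j : ℤ =>
          ENNReal.ofReal |(μ[S.indicator (fun ω => v ω ^ (1 - p'))|ℱ j]) ω|) i
      · rw [condExp_of_not_integrable hσint]
        filter_upwards with ω
        simp only [Pi.zero_apply, Real.zero_rpow hp1, mul_zero]
        exact hCp0
    · rw [condExp_of_not_integrable hvint]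
      filter_upwards with ω
      simpa using hCp0
  exact ⟨part1, fun Cv hCv => hCv.2 _ part1⟩
end

section
/- Let h ∈ L be nonnegative, a > 1, i ∈ ℤ, k ∈ ℤ, and Ω₀ ∈ F_i with μ(Ω₀) < ∞ on a σ-finite filtered measure space. Set P₀ = {ω ∈ Ω₀ : a^{k-1} < E_i(h)(ω) ≤ a^k}, define the stopping time τ(ω) = inf{ j ≥ i : E_j(h)(ω) > a^{k+1} } (with τ(ω) = ∞ if no such j exists), and set E(P₀) = P₀ ∩ {τ = ∞}. Then μ(P₀) ≤ (a/(a-1)) · μ(E(P₀)). -/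
open MeasureTheory

/-- On a σ-finite filtered measure space, with `P₀ = {a^{k-1} < E_i h ≤ a^k} ∩ Ω₀` and
`E(P₀) = P₀ ∩ {τ = ∞}` where `τ = inf{j ≥ i : E_j h > a^{k+1}}`, one has
`μ(P₀) ≤ (a/(a-1)) μ(E(P₀))`. -/
theorem stmt_5 {Ω : Type*} {m0 : MeasurableSpace Ω} (μ : Measure Ω) [SigmaFinite μ]
    (ℱ : Filtration ℤ m0) [∀ i : ℤ, SigmaFinite (μ.trim (ℱ.le i))]
    (h : Ω → ℝ) (hh0 : 0 ≤ h)
    (hhL : ∀ i : ℤ, ∀ s : Set Ω, MeasurableSet[ℱ i] s → μ s < ⊤ → IntegrableOn h s μ)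
    (a : ℝ) (ha : 1 < a) (i k : ℤ)
    (Ω₀ : Set Ω) (hΩ₀ : MeasurableSet[ℱ i] Ω₀) (hΩ₀fin : μ Ω₀ < ⊤)
    (P₀ : Set Ω)
    (hP₀ : P₀ = {ω ∈ Ω₀ | a ^ (k - 1) < (μ[h|ℱ i]) ω ∧ (μ[h|ℱ i]) ω ≤ a ^ k})
    (EP₀ : Set Ω)
    (hEP₀ : EP₀ = P₀ ∩ {ω | ∀ j : ℤ, i ≤ j → (μ[h|ℱ j]) ω ≤ a ^ (k + 1)}) :
    μ P₀ ≤ ENNReal.ofReal (a / (a - 1)) * μ EP₀ := by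
  classical
  have ha0 : (0 : ℝ) < a := lt_trans one_pos ha
  have hfm : ∀ j : ℤ, Measurable[ℱ j] (μ[h|ℱ j]) :=
    fun j => stronglyMeasurable_condExp.measurable
  -- measurability of P₀
  have hPm : MeasurableSet[ℱ i] P₀ := by
    have : P₀ = Ω₀ ∩ ({ω | a ^ (k - 1) < (μ[h|ℱ i]) ω} ∩ {ω | (μ[h|ℱ i]) ω ≤ a ^ k}) := by
      rw [hP₀]; ext ω; simp only [Set.mem_setOf_eq, Set.mem_inter_iff, and_assoc]
    rw [this]
    exact hΩ₀.inter ((measurableSet_lt measurable_const (hfm i)).inter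
      (measurableSet_le (hfm i) measurable_const))
  have hPm0 : MeasurableSet P₀ := ℱ.le i _ hPm
  have hPsub : P₀ ⊆ Ω₀ := by rw [hP₀]; exact fun ω hω => hω.1
  have hμP : μ P₀ < ⊤ := lt_of_le_of_lt (measure_mono hPsub) hΩ₀fin
  -- measurability of EP₀
  have hEm0 : MeasurableSet EP₀ := by
    have : EP₀ = P₀ ∩ ⋂ (j : ℤ) (_ : i ≤ j), {ω | (μ[h|ℱ j]) ω ≤ a ^ (k + 1)} := by
      rw [hEP₀]; ext ω; simp [Set.mem_setOf_eq]
    rw [this]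
    exact hPm0.inter (MeasurableSet.iInter fun j => MeasurableSet.iInter fun _ =>
      ℱ.le j _ (measurableSet_le (hfm j) measurable_const))
  have hEsub : EP₀ ⊆ P₀ := by rw [hEP₀]; exact Set.inter_subset_left
  have hμE : μ EP₀ < ⊤ := lt_of_le_of_lt (measure_mono hEsub) hμP
  by_cases hint : Integrable h μ
  swap
  · -- degenerate case : condexp is 0, so P₀ is empty
    have hP0 : P₀ = ∅ := by
      rw [hP₀]
      have hc0 : (μ[h|ℱ i]) = 0 := condExp_of_not_integrable hint
      rw [hc0]
      ext ω
      simp only [Set.mem_setOf_eq, Pi.zero_apply, Set.mem_empty_iff_false, iff_false, not_and]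
      intro _ hlt
      exact absurd hlt (not_lt.2 (zpow_pos ha0 _).le)
    simp [hP0]
  -- main case
  set c : ℝ := a ^ (k + 1) with hc
  set B : ℕ → Set Ω := fun n =>
    (P₀ ∩ {ω | c < (μ[h|ℱ (i + n)]) ω}) ∩
      ⋂ (m : ℕ) (_ : m < n), {ω | (μ[h|ℱ (i + m)]) ω ≤ c} with hB
  have hBm : ∀ n, MeasurableSet (B n) := by
    intro n
    refine (hPm0.inter (ℱ.le (i + n) _ (measurableSet_lt measurable_const (hfm _)))).inter ?_
    exact MeasurableSet.iInter fun m => MeasurableSet.iInter fun _ =>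
      ℱ.le (i + m) _ (measurableSet_le (hfm _) measurable_const)
  have hBmF : ∀ n : ℕ, MeasurableSet[ℱ (i + (n:ℤ))] (B n) := by
    intro n
    refine MeasurableSet.inter (MeasurableSet.inter ?_ ?_) ?_
    · exact ℱ.mono (le_add_of_nonneg_right (Int.natCast_nonneg n)) _ hPm
    · exact measurableSet_lt measurable_const (hfm _)
    · refine MeasurableSet.iInter fun m => MeasurableSet.iInter fun hm => ?_
      exact ℱ.mono (by omega) _
        (measurableSet_le (hfm _) measurable_const)
  have hBsub : ∀ n, B n ⊆ P₀ := fun n => fun ω hω => hω.1.1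
  have hμB : ∀ n, μ (B n) < ⊤ := fun n => lt_of_le_of_lt (measure_mono (hBsub n)) hμP
  have hdisj : Pairwise (Function.onFun Disjoint B) := by
    intro n m hnm
    wlog hlt : n < m generalizing n m
    · exact (this hnm.symm (hnm.lt_or_gt.resolve_left hlt)).symm
    rw [Function.onFun, Set.disjoint_left]
    intro ω hωn hωm
    have h1 : c < (μ[h|ℱ (i + n)]) ω := hωn.1.2
    have h2 : (μ[h|ℱ (i + n)]) ω ≤ c := by
      have := hωm.2
      simp only [Set.mem_iInter] at this
      exact this n hlt
    exact absurd h1 (not_lt.2 h2)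
  have hUnion : (⋃ n, B n) = P₀ \ EP₀ := by
    ext ω
    constructor
    · rintro ⟨_, ⟨n, rfl⟩, hω⟩
      refine ⟨hω.1.1, fun hE => ?_⟩
      rw [hEP₀] at hE
      exact absurd hω.1.2 (not_lt.2 (hE.2 (i + n) (le_add_of_nonneg_right (Int.natCast_nonneg n))))
    · rintro ⟨hωP, hωE⟩
      rw [hEP₀] at hωE
      have hex : ∃ n : ℕ, c < (μ[h|ℱ (i + n)]) ω := by
        by_contra hno
        push_neg at hno
        refine hωE ⟨hωP, fun j hj => ?_⟩
        have h1 := hno (j - i).toNat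
        rw [Int.toNat_of_nonneg (by omega : (0:ℤ) ≤ j - i)] at h1
        simpa [show i + (j - i) = j by ring] using h1
      refine Set.mem_iUnion.2 ⟨Nat.find hex, ⟨⟨hωP, Nat.find_spec hex⟩, ?_⟩⟩
      simp only [Set.mem_iInter, Set.mem_setOf_eq]
      exact fun m hm => not_lt.1 (Nat.find_min hex hm)
  -- key estimate per piece
  have hkey : ∀ n, c * (μ (B n)).toReal ≤ ∫ x in B n, h x ∂μ := by
    intro n
    have h1 : c * (μ (B n)).toReal ≤ ∫ x in B n, (μ[h|ℱ (i + n)]) x ∂μ := by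
      refine setIntegral_ge_of_const_le_real (hBm n) (hμB n).ne
        (fun x hx => (show c < (μ[h|ℱ (i + n)]) x from hx.1.2).le) ?_
      exact integrable_condExp.integrableOn
    have h2 : ∫ x in B n, (μ[h|ℱ (i + n)]) x ∂μ = ∫ x in B n, h x ∂μ :=
      setIntegral_condExp (ℱ.le (i + n)) hint (hBmF n)
    linarith
  -- summation
  have hintU : IntegrableOn h (⋃ n, B n) μ := hint.integrableOn
  have hsum : HasSum (fun n => ∫ x in B n, h x ∂μ) (∫ x in ⋃ n, B n, h x ∂μ) :=
    hasSum_integral_iUnion hBm hdisj hintU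
  have hμU : μ (⋃ n, B n) = ∑' n, μ (B n) := measure_iUnion hdisj hBm
  have hμUfin : μ (⋃ n, B n) < ⊤ := by
    rw [hUnion]; exact lt_of_le_of_lt (measure_mono Set.diff_subset) hμP
  have htsum : (μ (⋃ n, B n)).toReal = ∑' n, (μ (B n)).toReal := by
    rw [hμU, ENNReal.tsum_toReal_eq (fun n => (hμB n).ne)]
  have hsummeas : Summable (fun n => (μ (B n)).toReal) := by
    apply ENNReal.summable_toReal
    rw [← hμU]; exact hμUfin.ne
  have hstep1 : c * (μ (⋃ n, B n)).toReal ≤ ∫ x in ⋃ n, B n, h x ∂μ := by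
    rw [htsum, ← tsum_mul_left]
    rw [← hsum.tsum_eq]
    exact (hsummeas.mul_left c).tsum_le_tsum hkey hsum.summable
  have hstep2 : ∫ x in ⋃ n, B n, h x ∂μ ≤ ∫ x in P₀, h x ∂μ := by
    refine setIntegral_mono_set hint.integrableOn
      (Filter.Eventually.of_forall fun x => hh0 x) ?_
    exact HasSubset.Subset.eventuallyLE (by rw [hUnion]; exact Set.diff_subset)
  have hstep3 : ∫ x in P₀, h x ∂μ ≤ a ^ k * (μ P₀).toReal := by
    rw [← setIntegral_condExp (ℱ.le i) hint hPm]
    have : ∫ x in P₀, (μ[h|ℱ i]) x ∂μ ≤ ∫ _ in P₀, a ^ k ∂μ := by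
      refine setIntegral_mono_on integrable_condExp.integrableOn
        (integrableOn_const hμP.ne) hPm0 ?_
      intro x hx
      rw [hP₀] at hx
      exact hx.2.2
    rwa [setIntegral_const, smul_eq_mul, mul_comm] at this
  -- put together
  have hmain : c * (μ (P₀ \ EP₀)).toReal ≤ a ^ k * (μ P₀).toReal := by
    rw [← hUnion]; linarith
  have hsplit : (μ P₀).toReal = (μ EP₀).toReal + (μ (P₀ \ EP₀)).toReal := by
    have h1 : μ EP₀ + μ (P₀ \ EP₀) = μ P₀ := by
      rw [measure_add_diff hEm0.nullMeasurableSet, Set.union_eq_self_of_subset_left hEsub]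
    rw [← h1, ENNReal.toReal_add hμE.ne (lt_of_le_of_lt (measure_mono Set.diff_subset) hμP).ne]
  set p := (μ P₀).toReal
  set e := (μ EP₀).toReal
  set d := (μ (P₀ \ EP₀)).toReal
  have hp0 : 0 ≤ p := ENNReal.toReal_nonneg
  have he0 : 0 ≤ e := ENNReal.toReal_nonneg
  have hd0 : 0 ≤ d := ENNReal.toReal_nonneg
  have hak : (0:ℝ) < a ^ k := zpow_pos ha0 k
  have hcd : c = a ^ k * a := by rw [hc, zpow_add_one₀ ha0.ne']
  have had : a * d ≤ p := by
    have := hmain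
    rw [hcd] at this
    nlinarith
  have hfinal : p ≤ a / (a - 1) * e := by
    rw [div_mul_eq_mul_div, le_div_iff₀ (by linarith)]
    nlinarith
  calc μ P₀ = ENNReal.ofReal p := (ENNReal.ofReal_toReal hμP.ne).symm
    _ ≤ ENNReal.ofReal (a / (a - 1) * e) := ENNReal.ofReal_le_ofReal hfinal
    _ = ENNReal.ofReal (a / (a - 1)) * ENNReal.ofReal e :=
        ENNReal.ofReal_mul (div_nonneg (by linarith) (by linarith))
    _ = ENNReal.ofReal (a / (a - 1)) * μ EP₀ := by rw [ENNReal.ofReal_toReal hμE.ne]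
end

section
/- Let h ∈ L be nonnegative, a > 1, i ∈ ℤ, k ∈ ℤ, and Ω₀ ∈ F_i with μ(Ω₀) < ∞ on a σ-finite filtered measure space. Set P₀ = {ω ∈ Ω₀ : a^{k-1} < E_i(h)(ω) ≤ a^k}, τ(ω) = inf{ j ≥ i : E_j(h)(ω) > a^{k+1} } (τ = ∞ if no such j exists), and E(P₀) = P₀ ∩ {τ = ∞}. Then the conditional sparsity inequality χ_{P₀} ≤ (a/(a-1)) · E_i(χ_{E(P₀)}) · χ_{P₀} holds μ-almost everywhere; equivalently, E_i(χ_{E(P₀)}) ≥ (a-1)/a μ-a.e. on P₀. -/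
open MeasureTheory

set_option maxHeartbeats 1000000 in
/-- Conditional sparsity of the principal set construction: with
`P₀ = {a^{k-1} < E_i h ≤ a^k} ∩ Ω₀` and `E(P₀) = P₀ ∩ {τ = ∞}` where
`τ = inf{j ≥ i : E_j h > a^{k+1}}`, one has
`χ_{P₀} ≤ (a/(a-1)) · E_i(χ_{E(P₀)}) · χ_{P₀}` μ-a.e. -/
theorem stmt_6 {Ω : Type*} {m0 : MeasurableSpace Ω} (μ : Measure Ω) [SigmaFinite μ]
    (ℱ : Filtration ℤ m0) [∀ i : ℤ, SigmaFinite (μ.trim (ℱ.le i))]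
    (h : Ω → ℝ) (hh0 : 0 ≤ h)
    (hhL : ∀ i : ℤ, ∀ s : Set Ω, MeasurableSet[ℱ i] s → μ s < ⊤ → IntegrableOn h s μ)
    (a : ℝ) (ha : 1 < a) (i k : ℤ)
    (Ω₀ : Set Ω) (hΩ₀ : MeasurableSet[ℱ i] Ω₀) (hΩ₀fin : μ Ω₀ < ⊤)
    (P₀ : Set Ω)
    (hP₀ : P₀ = {ω ∈ Ω₀ | a ^ (k - 1) < (μ[h|ℱ i]) ω ∧ (μ[h|ℱ i]) ω ≤ a ^ k})
    (EP₀ : Set Ω)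
    (hEP₀ : EP₀ = P₀ ∩ {ω | ∀ j : ℤ, i ≤ j → (μ[h|ℱ j]) ω ≤ a ^ (k + 1)}) :
    ∀ᵐ ω ∂μ,
      P₀.indicator (fun _ => (1 : ℝ)) ω ≤
        a / (a - 1) * (μ[EP₀.indicator (fun _ => (1 : ℝ))|ℱ i]) ω *
          P₀.indicator (fun _ => (1 : ℝ)) ω := by
  classical
  have ha0 : (0 : ℝ) < a := lt_trans one_pos ha
  by_cases hint : Integrable h μ
  swap
  · -- degenerate case: the conditional expectation is 0, so `P₀ = ∅`
    have hP₀empty : P₀ = ∅ := by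
      rw [hP₀, condExp_of_not_integrable hint]
      ext ω
      simp only [Set.mem_setOf_eq, Pi.zero_apply, Set.mem_empty_iff_false, iff_false, not_and]
      intro _ hlt
      exact absurd hlt (not_lt.2 (le_of_lt (zpow_pos ha0 _)))
    filter_upwards with ω
    simp [hP₀empty]
  -- main case
  set c : ℝ := a ^ (k + 1) with hc
  -- measurability of P₀ w.r.t. ℱ i
  have hcdm : StronglyMeasurable[ℱ i] (μ[h|ℱ i]) := stronglyMeasurable_condExp
  have hP₀m : MeasurableSet[ℱ i] P₀ := by
    rw [hP₀]
    have : {ω ∈ Ω₀ | a ^ (k - 1) < (μ[h|ℱ i]) ω ∧ (μ[h|ℱ i]) ω ≤ a ^ k} =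
        Ω₀ ∩ ({ω | a ^ (k - 1) < (μ[h|ℱ i]) ω} ∩ {ω | (μ[h|ℱ i]) ω ≤ a ^ k}) := by
      ext ω
      simp only [Set.mem_setOf_eq, Set.mem_inter_iff, and_assoc]
    rw [this]
    exact hΩ₀.inter ((measurableSet_lt measurable_const hcdm.measurable).inter
      (measurableSet_le hcdm.measurable measurable_const))
  have hP₀sub : P₀ ⊆ Ω₀ := by rw [hP₀]; intro ω hω; exact hω.1
  have hP₀fin : μ P₀ < ⊤ := lt_of_le_of_lt (measure_mono hP₀sub) hΩ₀fin
  have hP₀m0 : MeasurableSet P₀ := ℱ.le i _ hP₀m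
  -- the exceptional set D
  set D : Set Ω := P₀ ∩ {ω | ∃ j : ℤ, i ≤ j ∧ c < (μ[h|ℱ j]) ω} with hD
  have hEPsub : EP₀ ⊆ P₀ := by rw [hEP₀]; exact Set.inter_subset_left
  have hDcompl : P₀ = EP₀ ∪ D ∧ Disjoint EP₀ D := by
    constructor
    · ext ω
      constructor
      · intro hω
        by_cases hτ : ∀ j : ℤ, i ≤ j → (μ[h|ℱ j]) ω ≤ c
        · exact Or.inl (by rw [hEP₀]; exact ⟨hω, hτ⟩)
        · push_neg at hτ
          obtain ⟨j, hj, hjl⟩ := hτ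
          exact Or.inr ⟨hω, ⟨j, hj, hjl⟩⟩
      · rintro (hω | hω)
        · exact hEPsub hω
        · exact hω.1
    · rw [hEP₀]
      rw [Set.disjoint_left]
      rintro ω ⟨-, hω2⟩ ⟨-, j, hj, hjl⟩
      exact absurd hjl (not_lt.2 (hω2 j hj))
  have hconm : ∀ j : ℤ, Measurable ((μ[h|ℱ j])) := fun j =>
    (stronglyMeasurable_condExp.mono (ℱ.le j)).measurable
  have hDm0 : MeasurableSet D := by
    apply hP₀m0.inter
    have : {ω | ∃ j : ℤ, i ≤ j ∧ c < (μ[h|ℱ j]) ω} =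
        ⋃ j : ℤ, ⋃ _ : i ≤ j, {ω | c < (μ[h|ℱ j]) ω} := by
      ext ω; simp [Set.mem_setOf_eq]
    rw [this]
    exact MeasurableSet.iUnion fun j => MeasurableSet.iUnion fun _ =>
      measurableSet_lt measurable_const (hconm j)
  have hEPm0 : MeasurableSet EP₀ := by
    rw [hEP₀]
    apply hP₀m0.inter
    have : {ω | ∀ j : ℤ, i ≤ j → (μ[h|ℱ j]) ω ≤ c} =
        ⋂ j : ℤ, ⋂ _ : i ≤ j, {ω | (μ[h|ℱ j]) ω ≤ c} := by
      ext ω; simp [Set.mem_setOf_eq]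
    rw [this]
    exact MeasurableSet.iInter fun j => MeasurableSet.iInter fun _ =>
      measurableSet_le (hconm j) measurable_const
  -- the stopping-time decomposition of D
  set A : ℕ → Set Ω := fun n =>
    (P₀ ∩ {ω | c < (μ[h|ℱ (i + n)]) ω}) ∩ ⋂ m ∈ Finset.range n, {ω | (μ[h|ℱ (i + m)]) ω ≤ c}
    with hA
  have hAmeas : ∀ n : ℕ, MeasurableSet[ℱ (i + n)] (A n) := by
    intro n
    apply MeasurableSet.inter
    · apply MeasurableSet.inter
      · exact ℱ.mono (le_add_of_nonneg_right (Int.ofNat_nonneg n)) _ hP₀m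
      · exact measurableSet_lt measurable_const stronglyMeasurable_condExp.measurable
    · apply Finset.measurableSet_biInter
      intro m hm
      have hmn : ℱ (i + m) ≤ ℱ (i + n) := ℱ.mono (by
        have := Finset.mem_range.1 hm
        omega)
      exact hmn _ (measurableSet_le stronglyMeasurable_condExp.measurable measurable_const)
  have hAm0 : ∀ n : ℕ, MeasurableSet (A n) := fun n => ℱ.le _ _ (hAmeas n)
  have hAdisj : Pairwise (Function.onFun Disjoint A) := by
    have key2 : ∀ m n : ℕ, m < n → Disjoint (A m) (A n) := by
      intro m n hlt
      rw [Set.disjoint_left]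
      intro ω hωm hωn
      have h1 : c < (μ[h|ℱ (i + m)]) ω := hωm.1.2
      have h2 : (μ[h|ℱ (i + m)]) ω ≤ c := by
        have := hωn.2
        simp only [Set.mem_iInter] at this
        exact this m (Finset.mem_range.2 hlt)
      exact absurd h1 (not_lt.2 h2)
    intro m n hmn
    rcases lt_or_gt_of_ne hmn with h' | h'
    · exact key2 m n h'
    · exact (key2 n m h').symm
  have hAsub : ∀ n, A n ⊆ P₀ := fun n => fun ω hω => hω.1.1
  have hAunion : (⋃ n, A n) = D := by
    ext ω
    constructor
    · rintro ⟨s, ⟨n, rfl⟩, hω⟩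
      exact ⟨hω.1.1, ⟨i + n, le_add_of_nonneg_right (Int.ofNat_nonneg n), hω.1.2⟩⟩
    · rintro ⟨hωP, j, hj, hjl⟩
      have hex : ∃ n : ℕ, c < (μ[h|ℱ (i + n)]) ω := by
        refine ⟨(j - i).toNat, ?_⟩
        have : i + ((j - i).toNat : ℤ) = j := by omega
        rwa [this]
      refine ⟨A (Nat.find hex), ⟨Nat.find hex, rfl⟩, ?_⟩
      refine ⟨⟨hωP, Nat.find_spec hex⟩, ?_⟩
      simp only [Set.mem_iInter]
      intro m hm
      exact not_lt.1 (Nat.find_min hex (Finset.mem_range.1 hm))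
  -- f i ≤ a^k on P₀
  have hfiP₀ : ∀ ω ∈ P₀, (μ[h|ℱ i]) ω ≤ a ^ k := by
    rw [hP₀]; intro ω hω; exact hω.2.2
  -- key estimate
  have key : ∀ S : Set Ω, MeasurableSet[ℱ i] S → μ S < ⊤ →
      a * (μ (D ∩ S)).toReal ≤ (μ (P₀ ∩ S)).toReal := by
    intro S hSm hSfin
    set B : ℕ → Set Ω := fun n => A n ∩ S with hB
    have hBm0 : ∀ n, MeasurableSet (B n) := fun n => (hAm0 n).inter (ℱ.le i _ hSm)
    have hBdisj : Pairwise (Function.onFun Disjoint B) := fun m n hmn =>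
      Set.disjoint_of_subset Set.inter_subset_left Set.inter_subset_left (hAdisj hmn)
    have hBunion : (⋃ n, B n) = D ∩ S := by
      rw [hB]; rw [← Set.iUnion_inter, hAunion]
    have hDSfin : μ (D ∩ S) < ⊤ :=
      lt_of_le_of_lt (measure_mono Set.inter_subset_right) hSfin
    have hμsum : μ (D ∩ S) = ∑' n, μ (B n) := by
      rw [← hBunion, measure_iUnion hBdisj hBm0]
    -- each piece estimate
    have hpiece : ∀ n : ℕ, c * (μ (B n)).toReal ≤ ∫ x in B n, h x ∂μ := by
      intro n
      have hBfin : μ (B n) ≠ ⊤ :=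
        (lt_of_le_of_lt (measure_mono Set.inter_subset_right) hSfin).ne
      have h1 : c * (μ (B n)).toReal ≤ ∫ x in B n, (μ[h|ℱ (i + n)]) x ∂μ := by
        apply setIntegral_ge_of_const_le_real (hBm0 n) hBfin
        · intro x hx
          exact le_of_lt hx.1.1.2
        · exact integrable_condExp.integrableOn
      have h2 : ∫ x in B n, (μ[h|ℱ (i + n)]) x ∂μ = ∫ x in B n, h x ∂μ := by
        apply setIntegral_condExp (ℱ.le (i + n)) hint
        exact (hAmeas n).inter (ℱ.mono (le_add_of_nonneg_right (Int.ofNat_nonneg n)) _ hSm)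
      rw [h2] at h1; exact h1
    -- sum up
    have hsumInt : HasSum (fun n => ∫ x in B n, h x ∂μ) (∫ x in D ∩ S, h x ∂μ) := by
      rw [← hBunion]
      exact hasSum_integral_iUnion hBm0 hBdisj hint.integrableOn
    have hsumMeas : HasSum (fun n => (μ (B n)).toReal) (μ (D ∩ S)).toReal := by
      have hne : ∑' n, μ (B n) ≠ ⊤ := by rw [← hμsum]; exact hDSfin.ne
      have := ENNReal.hasSum_toReal hne
      have heq : (∑' n, (μ (B n)).toReal) = (μ (D ∩ S)).toReal := by
        rw [hμsum, ENNReal.tsum_toReal_eq]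
        intro n
        exact (lt_of_le_of_lt (measure_mono Set.inter_subset_right) hSfin).ne
      rwa [heq] at this
    have hstep1 : c * (μ (D ∩ S)).toReal ≤ ∫ x in D ∩ S, h x ∂μ :=
      hasSum_le hpiece (hsumMeas.mul_left c) hsumInt
    -- compare with the integral over P₀ ∩ S
    have hstep2 : ∫ x in D ∩ S, h x ∂μ ≤ ∫ x in P₀ ∩ S, h x ∂μ := by
      apply setIntegral_mono_set hint.integrableOn
      · exact Filter.Eventually.of_forall fun x => hh0 x
      · exact Filter.Eventually.of_forall (Set.inter_subset_inter_left S (fun x hx => hx.1))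
    have hPSm : MeasurableSet[ℱ i] (P₀ ∩ S) := hP₀m.inter hSm
    have hPSfin : μ (P₀ ∩ S) < ⊤ :=
      lt_of_le_of_lt (measure_mono Set.inter_subset_right) hSfin
    have hstep3 : ∫ x in P₀ ∩ S, h x ∂μ = ∫ x in P₀ ∩ S, (μ[h|ℱ i]) x ∂μ :=
      (setIntegral_condExp (ℱ.le i) hint hPSm).symm
    have hstep4 : ∫ x in P₀ ∩ S, (μ[h|ℱ i]) x ∂μ ≤ a ^ k * (μ (P₀ ∩ S)).toReal := by
      have := setIntegral_mono_on (integrable_condExp.integrableOn)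
        (integrableOn_const hPSfin.ne) (ℱ.le i _ hPSm)
        (fun x hx => hfiP₀ x hx.1)
      rw [setIntegral_const] at this
      rw [smul_eq_mul, mul_comm] at this
      exact this
    have hchain : c * (μ (D ∩ S)).toReal ≤ a ^ k * (μ (P₀ ∩ S)).toReal := by
      calc c * (μ (D ∩ S)).toReal ≤ ∫ x in D ∩ S, h x ∂μ := hstep1
        _ ≤ ∫ x in P₀ ∩ S, h x ∂μ := hstep2
        _ = ∫ x in P₀ ∩ S, (μ[h|ℱ i]) x ∂μ := hstep3
        _ ≤ a ^ k * (μ (P₀ ∩ S)).toReal := hstep4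
    have hck : c = a * a ^ k := by
      rw [hc, zpow_add_one₀ (ne_of_gt ha0), mul_comm]
    rw [hck] at hchain
    have hak : (0 : ℝ) < a ^ k := zpow_pos ha0 k
    nlinarith [hchain, hak]
  -- indicators are integrable
  have hχD : Integrable (D.indicator (fun _ => (1 : ℝ))) μ := by
    rw [integrable_indicator_iff hDm0]
    exact integrableOn_const (lt_of_le_of_lt
      (measure_mono Set.inter_subset_left) hP₀fin).ne
  have hχEP : Integrable (EP₀.indicator (fun _ => (1 : ℝ))) μ := by
    rw [integrable_indicator_iff hEPm0]
    exact integrableOn_const (lt_of_le_of_lt (measure_mono hEPsub) hP₀fin).ne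
  have hχP : Integrable (P₀.indicator (fun _ => (1 : ℝ))) μ := by
    rw [integrable_indicator_iff hP₀m0]
    exact integrableOn_const hP₀fin.ne
  -- a.e. estimate : a * E_i χ_D ≤ χ_{P₀}
  set g : Ω → ℝ := μ[D.indicator (fun _ => (1 : ℝ))|ℱ i] with hg
  set φ : Ω → ℝ := fun ω => P₀.indicator (fun _ => (1 : ℝ)) ω - a * g ω with hφ
  have hφmeas : StronglyMeasurable[ℱ i] φ := by
    apply StronglyMeasurable.sub
    · exact (stronglyMeasurable_const.indicator hP₀m)
    · exact stronglyMeasurable_const.mul stronglyMeasurable_condExp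
  have hφint : Integrable φ μ :=
    hχP.sub (integrable_condExp.const_mul a)
  have hφ_ae : 0 ≤ᵐ[μ] φ := by
    apply ae_le_of_ae_le_trim (hm := ℱ.le i)
    apply ae_nonneg_of_forall_setIntegral_nonneg
    · exact hφint.trim (ℱ.le i) hφmeas
    · intro S hSm hSfin
      rw [← setIntegral_trim (ℱ.le i) hφmeas hSm]
      rw [trim_measurableSet_eq (ℱ.le i) hSm] at hSfin
      have hSm0 : MeasurableSet S := ℱ.le i _ hSm
      have hgident : ∫ x in S, g x ∂μ = (μ (D ∩ S)).toReal := by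
        rw [hg, setIntegral_condExp (ℱ.le i) hχD hSm,
          setIntegral_indicator hDm0]
        simp [Set.inter_comm, Measure.restrict_apply hDm0, Measure.real_def]
      have hPident : ∫ x in S, P₀.indicator (fun _ => (1 : ℝ)) x ∂μ =
          (μ (P₀ ∩ S)).toReal := by
        rw [setIntegral_indicator hP₀m0]
        simp [Set.inter_comm, Measure.restrict_apply hP₀m0, Measure.real_def]
      have hsplit : ∫ x in S, φ x ∂μ =
          (∫ x in S, P₀.indicator (fun _ => (1 : ℝ)) x ∂μ) - a * ∫ x in S, g x ∂μ := by
        rw [hφ]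
        rw [integral_sub (hχP.integrableOn) ((integrable_condExp.const_mul a).integrableOn)]
        rw [integral_const_mul]
      rw [hsplit, hgident, hPident]
      have := key S hSm hSfin
      linarith
  -- decomposition of the conditional expectations
  have hindsum : D.indicator (fun _ => (1 : ℝ)) + EP₀.indicator (fun _ => (1 : ℝ)) =
      P₀.indicator (fun _ => (1 : ℝ)) := by
    obtain ⟨hun, hdisj⟩ := hDcompl
    funext ω
    by_cases hωD : ω ∈ D
    · have hωP : ω ∈ P₀ := hωD.1
      have hωE : ω ∉ EP₀ := fun hωE => Set.disjoint_left.1 hdisj hωE hωD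
      simp [Set.indicator_of_mem hωD, Set.indicator_of_notMem hωE,
        Set.indicator_of_mem hωP]
    · by_cases hωE : ω ∈ EP₀
      · have hωP : ω ∈ P₀ := hEPsub hωE
        simp [Set.indicator_of_notMem hωD, Set.indicator_of_mem hωE,
          Set.indicator_of_mem hωP]
      · have hωP : ω ∉ P₀ := by
          intro hωP
          rw [hun] at hωP
          rcases hωP with h1 | h2
          exacts [hωE h1, hωD h2]
        simp [Set.indicator_of_notMem hωD, Set.indicator_of_notMem hωE,
          Set.indicator_of_notMem hωP]
  have hcondadd : μ[D.indicator (fun _ => (1 : ℝ)) + EP₀.indicator (fun _ => (1 : ℝ))|ℱ i]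
      =ᵐ[μ] g + μ[EP₀.indicator (fun _ => (1 : ℝ))|ℱ i] := condExp_add hχD hχEP _
  have hcondP : μ[P₀.indicator (fun _ => (1 : ℝ))|ℱ i] = P₀.indicator (fun _ => (1 : ℝ)) :=
    condExp_of_stronglyMeasurable (ℱ.le i) (stronglyMeasurable_const.indicator hP₀m) hχP
  have hsum_ae : ∀ᵐ ω ∂μ, g ω + (μ[EP₀.indicator (fun _ => (1 : ℝ))|ℱ i]) ω =
      P₀.indicator (fun _ => (1 : ℝ)) ω := by
    filter_upwards [hcondadd] with ω hω
    have : (μ[D.indicator (fun _ => (1 : ℝ)) + EP₀.indicator (fun _ => (1 : ℝ))|ℱ i]) ω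
        = P₀.indicator (fun _ => (1 : ℝ)) ω := by
      rw [hindsum, hcondP]
    rw [this] at hω
    exact hω.symm
  -- conclusion
  filter_upwards [hφ_ae, hsum_ae] with ω h1 h2
  by_cases hωP : ω ∈ P₀
  · rw [Set.indicator_of_mem hωP] at h2 ⊢
    have hφω : 0 ≤ φ ω := h1
    rw [hφ] at hφω
    simp only [Set.indicator_of_mem hωP] at hφω
    -- hφω : 0 ≤ 1 - a * g ω, h2 : g ω + e ω = 1
    set e := (μ[EP₀.indicator (fun _ => (1 : ℝ))|ℱ i]) ω with he
    rw [mul_one]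
    have ha1 : (0 : ℝ) < a - 1 := by linarith
    rw [div_mul_eq_mul_div, le_div_iff₀ ha1]
    have hae : a * e = a - a * g ω := by
      have : e = 1 - g ω := by linarith
      rw [this]; ring
    linarith
  · simp [Set.indicator_of_notMem hωP]
end

section
/- Let h ∈ L be nonnegative, a > 1, i ∈ ℤ, k ∈ ℤ, and Ω₀ ∈ F_i with μ(Ω₀) < ∞ on a σ-finite filtered measure space. Set P₀ = {ω ∈ Ω₀ : a^{k-1} < E_i(h)(ω) ≤ a^k}, τ(ω) = inf{ j ≥ i : E_j(h)(ω) > a^{k+1} } (τ = ∞ if no such j exists), and E(P₀) = P₀ ∩ {τ = ∞}. Then μ-a.e. on E(P₀) one has sup_{j ≥ i} E_j(h·χ_{P₀}) ≤ a^{k+1}. -/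
open MeasureTheory

/-- With `P₀ = {a^{k-1} < E_i h ≤ a^k} ∩ Ω₀` and `E(P₀) = P₀ ∩ {τ = ∞}` where
`τ = inf{j ≥ i : E_j h > a^{k+1}}`, μ-a.e. on `E(P₀)` one has
`sup_{j ≥ i} E_j(h χ_{P₀}) ≤ a^{k+1}`. -/
theorem stmt_7 {Ω : Type*} {m0 : MeasurableSpace Ω} (μ : Measure Ω) [SigmaFinite μ]
    (ℱ : Filtration ℤ m0) [∀ i : ℤ, SigmaFinite (μ.trim (ℱ.le i))]
    (h : Ω → ℝ) (hh0 : 0 ≤ h)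
    (hhL : ∀ i : ℤ, ∀ s : Set Ω, MeasurableSet[ℱ i] s → μ s < ⊤ → IntegrableOn h s μ)
    (a : ℝ) (ha : 1 < a) (i k : ℤ)
    (Ω₀ : Set Ω) (hΩ₀ : MeasurableSet[ℱ i] Ω₀) (hΩ₀fin : μ Ω₀ < ⊤)
    (P₀ : Set Ω)
    (hP₀ : P₀ = {ω ∈ Ω₀ | a ^ (k - 1) < (μ[h|ℱ i]) ω ∧ (μ[h|ℱ i]) ω ≤ a ^ k})
    (EP₀ : Set Ω)
    (hEP₀ : EP₀ = P₀ ∩ {ω | ∀ j : ℤ, i ≤ j → (μ[h|ℱ j]) ω ≤ a ^ (k + 1)}) :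
    ∀ᵐ ω ∂μ, ω ∈ EP₀ →
      ∀ j : ℤ, i ≤ j → (μ[P₀.indicator h|ℱ j]) ω ≤ a ^ (k + 1) := by
  have ha0 : (0:ℝ) < a := lt_trans one_pos ha
  by_cases hint : Integrable h μ
  · have hP₀meas : MeasurableSet P₀ := by
      rw [hP₀]
      have hm : StronglyMeasurable[ℱ i] (μ[h|ℱ i]) := stronglyMeasurable_condExp
      have hmeas : Measurable[ℱ i] (μ[h|ℱ i]) := hm.measurable
      exact (ℱ.le i) _ (hΩ₀.inter ((measurableSet_lt measurable_const hmeas).inter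
        (measurableSet_le hmeas measurable_const)))
    have key : ∀ j : ℤ, ∀ᵐ ω ∂μ, (μ[P₀.indicator h|ℱ j]) ω ≤ (μ[h|ℱ j]) ω := by
      intro j
      refine condExp_mono (hint.indicator hP₀meas) hint ?_
      filter_upwards with ω
      exact Set.indicator_le_self' (fun x _ => hh0 x) ω
    have hall := (ae_all_iff.2 key)
    filter_upwards [hall] with ω hω hmem j hij
    have hmem' := hEP₀ ▸ hmem
    exact (hω j).trans (hmem'.2 j hij)
  · have hcz : μ[h|ℱ i] = 0 := condExp_of_not_integrable hint
    have hP₀empty : P₀ = ∅ := by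
      rw [hP₀, hcz]
      ext ω
      simp only [Set.mem_setOf_eq, Pi.zero_apply, Set.mem_empty_iff_false, iff_false]
      rintro ⟨-, hlt, -⟩
      exact absurd hlt (not_lt.2 (zpow_pos ha0 _).le)
    rw [hP₀empty]
    simp only [Set.indicator_empty, condExp_zero, Pi.zero_apply]
    filter_upwards with ω _ j _
    have h0 : (μ[(fun _ : Ω => (0:ℝ))|ℱ j]) ω = 0 := by
      rw [show (fun _ : Ω => (0:ℝ)) = 0 from rfl, condExp_zero]; rfl
    rw [h0]
    exact (zpow_pos ha0 _).le
end

section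
/- Fix a real number p with 1 < p < ∞ and define φ_p(a) = a² · (a/(a-1))^{1/(p-1)} for real a > 1. Then φ_p attains its minimum over (1, ∞) at a₀ = (2p-1)/(2p-2); that is, for every a > 1, φ_p((2p-1)/(2p-2)) ≤ φ_p(a), and the minimum value equals ((2p-1)/(2p-2))² · (2p-1)^{1/(p-1)}. -/
open Real

/-- For `1 < p < ∞`, the function `φ_p(a) = a² (a/(a-1))^{1/(p-1)}` attains its minimum
over `(1, ∞)` at `a₀ = (2p-1)/(2p-2)`, and the minimum value is
`((2p-1)/(2p-2))² (2p-1)^{1/(p-1)}`. -/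
theorem stmt_9 (p : ℝ) (hp : 1 < p) (φ : ℝ → ℝ)
    (hφ : ∀ a : ℝ, φ a = a ^ 2 * (a / (a - 1)) ^ (1 / (p - 1))) :
    ((2 * p - 1) / (2 * p - 2)) ∈ Set.Ioi (1 : ℝ) ∧
    (∀ a : ℝ, 1 < a → φ ((2 * p - 1) / (2 * p - 2)) ≤ φ a) ∧
    φ ((2 * p - 1) / (2 * p - 2)) =
      ((2 * p - 1) / (2 * p - 2)) ^ 2 * (2 * p - 1) ^ (1 / (p - 1)) := by
  have hp1 : (0:ℝ) < p - 1 := by linarith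
  set ε : ℝ := 1 / (p - 1) with hεdef
  have hεpos : 0 < ε := by positivity
  set m : ℝ := 2 * p - 1 with hmdef
  have hm1 : 1 < m := by rw [hmdef]; linarith
  have hm0 : 0 < m := by linarith
  have hmm : 0 < m - 1 := by linarith
  have ha0eq : (2 * p - 1) / (2 * p - 2) = m / (m - 1) := by
    rw [hmdef]; ring_nf
  have ha0gt : 1 < m / (m - 1) := (one_lt_div hmm).2 (by linarith)
  set q : ℝ := m / (m - 1) with hqdef
  have hq0 : 0 < q := by positivity
  have hmε : m * ε = 2 + ε := by
    rw [hmdef, hεdef]; field_simp; ring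
  have hm1ε : (m - 1) * ε = 2 := by
    rw [hmdef, hεdef]; field_simp; ring
  -- representation: φ a = (a^m / (a-1))^ε for a > 1
  have key : ∀ a : ℝ, 1 < a → φ a = (a ^ m / (a - 1)) ^ ε := by
    intro a ha
    have ha0' : (0:ℝ) < a := by linarith
    have ha1 : (0:ℝ) < a - 1 := by linarith
    rw [hφ, Real.div_rpow ha0'.le ha1.le,
        Real.div_rpow (Real.rpow_nonneg ha0'.le m) ha1.le,
        ← Real.rpow_mul ha0'.le, hmε, Real.rpow_add ha0', Real.rpow_two]
    ring
  have hqval : q / (q - 1) = m := by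
    rw [hqdef]; field_simp; ring
  have hval : φ q = q ^ 2 * m ^ ε := by
    rw [hφ, hqval]
  refine ⟨by rw [Set.mem_Ioi]; exact lt_of_lt_of_eq ha0gt ha0eq.symm, ?_, ?_⟩
  · intro a ha
    have ha0' : (0:ℝ) < a := lt_trans one_pos ha
    have hat : (0:ℝ) < a - 1 := by linarith
    have hw : (m - 1) / m + 1 / m = 1 := by field_simp; ring
    have amgm := Real.geom_mean_le_arith_mean2_weighted
      (by positivity : (0:ℝ) ≤ (m - 1) / m) (by positivity : (0:ℝ) ≤ 1 / m)
      hq0.le (by positivity : (0:ℝ) ≤ m * (a - 1)) hw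
    have hsum : (m - 1) / m * q + 1 / m * (m * (a - 1)) = a := by
      rw [hqdef]; field_simp; ring
    rw [hsum] at amgm
    have h2 : (q ^ ((m - 1) / m) * (m * (a - 1)) ^ (1 / m)) ^ m ≤ a ^ m :=
      Real.rpow_le_rpow (by positivity) amgm hm0.le
    have h3 : (q ^ ((m - 1) / m) * (m * (a - 1)) ^ (1 / m)) ^ m
        = q ^ (m - 1) * (m * (a - 1)) := by
      rw [Real.mul_rpow (by positivity) (by positivity),
          ← Real.rpow_mul hq0.le, ← Real.rpow_mul (by positivity),
          div_mul_cancel₀ _ hm0.ne', one_div_mul_cancel hm0.ne', Real.rpow_one]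
    rw [h3] at h2
    have h4 : q ^ (m - 1) * m ≤ a ^ m / (a - 1) := by
      rw [le_div_iff₀ hat, mul_assoc]
      exact h2
    have h5 : (q ^ (m - 1) * m) ^ ε ≤ (a ^ m / (a - 1)) ^ ε :=
      Real.rpow_le_rpow (by positivity) h4 hεpos.le
    have h6 : (q ^ (m - 1) * m) ^ ε = q ^ 2 * m ^ ε := by
      rw [Real.mul_rpow (by positivity) hm0.le, ← Real.rpow_mul hq0.le,
          hm1ε, Real.rpow_two]
    rw [ha0eq, hval, key a ha, ← h6]
    exact h5
  · rw [ha0eq]; exact hval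
end
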